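/- co-1ReachU is not contained in 1N; that is, there exists a family of promise problems L such that co-L ∈ 1ReachU but L ∉ 1N. -/

import Mathlib

/-! ## One-way nondeterministic finite automata -/

structure OneNFA (α : Type) : Type 1 where
  Q : Type
  [finQ : Fintype Q]
  start : Q
  next : Q → α → Set Q
  next_nonempty : ∀ q a, (next q a).Nonempty
  acc : Set Q

attribute [instance] OneNFA.finQ

namespace OneNFA

variable {α : Type}

/-- The state complexity (number of inner states). -/
def sc (M : OneNFA α) : ℕ := Fintype.card M.Q

/-- `p` is a computation path of `M` on input `x`. -/
def IsPath (M : OneNFA α) (x : List α) (p : Fin (x.length + 1) → M.Q) : Prop :=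
  p 0 = M.start ∧ ∀ i : Fin x.length, p i.succ ∈ M.next (p i.castSucc) (x.get i)

/-- `p` is an accepting computation path of `M` on input `x`. -/
def IsAccPath (M : OneNFA α) (x : List α) (p : Fin (x.length + 1) → M.Q) : Prop :=
  M.IsPath x p ∧ p (Fin.last x.length) ∈ M.acc

def Accepts (M : OneNFA α) (x : List α) : Prop := ∃ p, M.IsAccPath x p

/-- `M` is a 1dfa: every transition set is a singleton. -/
def Deterministic (M : OneNFA α) : Prop := ∀ q a, ∃ q', M.next q a = {q'}

end OneNFA

/-! ## Families of promise problems -/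

structure PromiseFamily (α : Type) where
  pos : ℕ → Set (List α)
  neg : ℕ → Set (List α)
  disj : ∀ n, Disjoint (pos n) (neg n)

namespace PromiseFamily

def valid {α : Type} (L : PromiseFamily α) (n : ℕ) : Set (List α) := L.pos n ∪ L.neg n

def co {α : Type} (L : PromiseFamily α) : PromiseFamily α :=
  ⟨L.neg, L.pos, fun n => (L.disj n).symm⟩

end PromiseFamily

/-- A family of promise problems over some finite alphabet. -/
structure Family : Type 1 where
  alph : Type
  [finA : Fintype alph]
  prob : PromiseFamily alph

attribute [instance] Family.finA

def Family.co (F : Family) : Family := { alph := F.alph, prob := F.prob.co }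

/-! ## One-way machine families -/

def Solves1 {α : Type} (M : ℕ → OneNFA α) (L : PromiseFamily α) : Prop :=
  ∀ n, (∀ x ∈ L.pos n, (M n).Accepts x) ∧ (∀ x ∈ L.neg n, ¬ (M n).Accepts x)

def PolySize1 {α : Type} (M : ℕ → OneNFA α) : Prop :=
  ∃ p : Polynomial ℕ, ∀ n, (M n).sc ≤ p.eval n

def Unambiguous1 {α : Type} (M : ℕ → OneNFA α) (L : PromiseFamily α) : Prop :=
  ∀ n, ∀ x ∈ L.valid n, {p | (M n).IsAccPath x p}.Subsingleton

def AcceptFew1 {α : Type} (M : ℕ → OneNFA α) (L : PromiseFamily α) : Prop :=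
  ∃ P : MvPolynomial (Fin 2) ℕ, ∀ n, ∀ x ∈ L.valid n,
    {p | (M n).IsAccPath x p}.ncard ≤ MvPolynomial.eval ![n, x.length] P

def WeaklyUnambiguous1 {α : Type} (M : ℕ → OneNFA α) (L : PromiseFamily α) : Prop :=
  ∀ n, ∀ x ∈ L.valid n, ∀ q : (M n).Q,
    {p | (M n).IsAccPath x p ∧ p (Fin.last x.length) = q}.Subsingleton

def ReachUnambiguous1 {α : Type} (M : ℕ → OneNFA α) (L : PromiseFamily α) : Prop :=
  ∀ n, ∀ x ∈ L.valid n, ∀ i ≤ x.length, ∀ q : (M n).Q,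
    {p : Fin ((x.take i).length + 1) → (M n).Q |
      (M n).IsPath (x.take i) p ∧ p (Fin.last (x.take i).length) = q}.Subsingleton

def ReachFew1 {α : Type} (M : ℕ → OneNFA α) (L : PromiseFamily α) : Prop :=
  ∃ P : MvPolynomial (Fin 2) ℕ, ∀ n, ∀ x ∈ L.valid n, ∀ i ≤ x.length, ∀ q : (M n).Q,
    {p : Fin ((x.take i).length + 1) → (M n).Q |
      (M n).IsPath (x.take i) p ∧ p (Fin.last (x.take i).length) = q}.ncard ≤
      MvPolynomial.eval ![n, x.length] P

/-! ## One-way nonuniform state complexity classes -/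

def oneN : Set Family :=
  {F | ∃ M : ℕ → OneNFA F.alph, PolySize1 M ∧ Solves1 M F.prob}

def oneD : Set Family :=
  {F | ∃ M : ℕ → OneNFA F.alph, PolySize1 M ∧ (∀ n, (M n).Deterministic) ∧ Solves1 M F.prob}

def oneU : Set Family :=
  {F | ∃ M : ℕ → OneNFA F.alph, PolySize1 M ∧ Unambiguous1 M F.prob ∧ Solves1 M F.prob}

def oneFew : Set Family :=
  {F | ∃ M : ℕ → OneNFA F.alph, PolySize1 M ∧ AcceptFew1 M F.prob ∧ Solves1 M F.prob}

def oneFewU : Set Family :=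
  {F | ∃ M : ℕ → OneNFA F.alph, PolySize1 M ∧ AcceptFew1 M F.prob ∧
        WeaklyUnambiguous1 M F.prob ∧ Solves1 M F.prob}

def oneReachU : Set Family :=
  {F | ∃ M : ℕ → OneNFA F.alph, PolySize1 M ∧ AcceptFew1 M F.prob ∧
        ReachUnambiguous1 M F.prob ∧ Solves1 M F.prob}

def oneReachFew : Set Family :=
  {F | ∃ M : ℕ → OneNFA F.alph, PolySize1 M ∧ AcceptFew1 M F.prob ∧
        ReachFew1 M F.prob ∧ Solves1 M F.prob}

def oneReachFewU : Set Family :=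
  {F | ∃ M : ℕ → OneNFA F.alph, PolySize1 M ∧ AcceptFew1 M F.prob ∧
        ReachFew1 M F.prob ∧ WeaklyUnambiguous1 M F.prob ∧ Solves1 M F.prob}

/-- The complement class `co-C`. -/
def coC (C : Set Family) : Set Family := {F | F.co ∈ C}
/-! ## Two-way nondeterministic finite automata -/

/-- A tape symbol: either an input symbol, the left endmarker `Sum.inr false`,
or the right endmarker `Sum.inr true`. -/
def TapeSym (α : Type) : Type := α ⊕ Bool

/-- The symbol held in cell `i` of the tape containing `▷x◁`. -/
def tapeAt {α : Type} (x : List α) (i : ℕ) : TapeSym α :=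
  if h0 : i = 0 then Sum.inr false
  else if h : i ≤ x.length then Sum.inl (x.get ⟨i - 1, by omega⟩)
  else Sum.inr true

structure TwoNFA (α : Type) : Type 1 where
  Q : Type
  [finQ : Fintype Q]
  start : Q
  acc : Set Q
  rej : Set Q
  acc_rej_disj : Disjoint acc rej
  next : Q → TapeSym α → Set (Q × ℤ)
  next_dir : ∀ q a t, t ∈ next q a → t.2 = -1 ∨ t.2 = 0 ∨ t.2 = 1

attribute [instance] TwoNFA.finQ

namespace TwoNFA

variable {α : Type}

def sc (M : TwoNFA α) : ℕ := Fintype.card M.Q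

def Halting (M : TwoNFA α) (q : M.Q) : Prop := q ∈ M.acc ∨ q ∈ M.rej

/-- Configuration `c` yields configuration `c'` in one step on input `x`. -/
def Yields (M : TwoNFA α) (x : List α) (c c' : M.Q × ℕ) : Prop :=
  ¬ M.Halting c.1 ∧ c.2 ≤ x.length + 1 ∧ c'.2 ≤ x.length + 1 ∧
    ∃ d : ℤ, (c'.1, d) ∈ M.next c.1 (tapeAt x c.2) ∧ (c'.2 : ℤ) = (c.2 : ℤ) + d

/-- A partial computation path of length `k` of `M` on `x`. -/
def IsPartialPath (M : TwoNFA α) (x : List α) (k : ℕ) (p : Fin (k + 1) → M.Q × ℕ) : Prop :=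
  p 0 = (M.start, 0) ∧ ∀ i : Fin k, M.Yields x (p i.castSucc) (p i.succ)

/-- A (full) computation path: the final configuration is the only halting one. -/
def IsCompPath (M : TwoNFA α) (x : List α) (k : ℕ) (p : Fin (k + 1) → M.Q × ℕ) : Prop :=
  M.IsPartialPath x k p ∧ ∀ i : Fin (k + 1), (M.Halting (p i).1 ↔ i = Fin.last k)

def IsAccPath (M : TwoNFA α) (x : List α) (k : ℕ) (p : Fin (k + 1) → M.Q × ℕ) : Prop :=
  M.IsCompPath x k p ∧ (p (Fin.last k)).1 ∈ M.acc

def Accepts (M : TwoNFA α) (x : List α) : Prop := ∃ k p, M.IsAccPath x k p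

def Deterministic (M : TwoNFA α) : Prop := ∀ q a, ∃ t, M.next q a = {t}

/-- The set of accepting computation paths of `M` on `x`. -/
def accPaths (M : TwoNFA α) (x : List α) : Set ((k : ℕ) × (Fin (k + 1) → M.Q × ℕ)) :=
  {kp | M.IsAccPath x kp.1 kp.2}

/-- The set of computation paths of `M` on `x` ending at configuration `conf`. -/
def compPathsTo (M : TwoNFA α) (x : List α) (conf : M.Q × ℕ) :
    Set ((k : ℕ) × (Fin (k + 1) → M.Q × ℕ)) :=
  {kp | M.IsCompPath x kp.1 kp.2 ∧ kp.2 (Fin.last kp.1) = conf}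

/-- The set of partial computation paths of `M` on `x` ending at configuration `conf`. -/
def partialPathsTo (M : TwoNFA α) (x : List α) (conf : M.Q × ℕ) :
    Set ((k : ℕ) × (Fin (k + 1) → M.Q × ℕ)) :=
  {kp | M.IsPartialPath x kp.1 kp.2 ∧ kp.2 (Fin.last kp.1) = conf}

end TwoNFA

/-! ## Two-way machine families -/

def Solves2 {α : Type} (M : ℕ → TwoNFA α) (L : PromiseFamily α) : Prop :=
  ∀ n, (∀ x ∈ L.pos n, (M n).Accepts x) ∧ (∀ x ∈ L.neg n, ¬ (M n).Accepts x)

def PolySize2 {α : Type} (M : ℕ → TwoNFA α) : Prop :=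
  ∃ p : Polynomial ℕ, ∀ n, (M n).sc ≤ p.eval n

def Unambiguous2 {α : Type} (M : ℕ → TwoNFA α) (L : PromiseFamily α) : Prop :=
  ∀ n, ∀ x ∈ L.valid n, ((M n).accPaths x).Subsingleton

def AcceptFew2 {α : Type} (M : ℕ → TwoNFA α) (L : PromiseFamily α) : Prop :=
  ∃ P : MvPolynomial (Fin 2) ℕ, ∀ n, ∀ x ∈ L.valid n,
    ((M n).accPaths x).encard ≤ (MvPolynomial.eval ![n, x.length] P : ℕ∞)

def WeaklyUnambiguous2 {α : Type} (M : ℕ → TwoNFA α) (L : PromiseFamily α) : Prop :=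
  ∀ n, ∀ x ∈ L.valid n, ∀ conf : (M n).Q × ℕ, conf.1 ∈ (M n).acc →
    ((M n).compPathsTo x conf).Subsingleton

def ReachUnambiguous2 {α : Type} (M : ℕ → TwoNFA α) (L : PromiseFamily α) : Prop :=
  ∀ n, ∀ x ∈ L.valid n, ∀ conf : (M n).Q × ℕ,
    ((M n).partialPathsTo x conf).Subsingleton

def ReachFew2 {α : Type} (M : ℕ → TwoNFA α) (L : PromiseFamily α) : Prop :=
  ∃ P : MvPolynomial (Fin 2) ℕ, ∀ n, ∀ x ∈ L.valid n, ∀ conf : (M n).Q × ℕ,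
    ((M n).partialPathsTo x conf).encard ≤ (MvPolynomial.eval ![n, x.length] P : ℕ∞)

/-! ## Two-way nonuniform state complexity classes -/

def twoN : Set Family :=
  {F | ∃ M : ℕ → TwoNFA F.alph, PolySize2 M ∧ Solves2 M F.prob}

def twoD : Set Family :=
  {F | ∃ M : ℕ → TwoNFA F.alph, PolySize2 M ∧ (∀ n, (M n).Deterministic) ∧ Solves2 M F.prob}

def twoU : Set Family :=
  {F | ∃ M : ℕ → TwoNFA F.alph, PolySize2 M ∧ Unambiguous2 M F.prob ∧ Solves2 M F.prob}

def twoFew : Set Family :=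
  {F | ∃ M : ℕ → TwoNFA F.alph, PolySize2 M ∧ AcceptFew2 M F.prob ∧ Solves2 M F.prob}

def twoFewU : Set Family :=
  {F | ∃ M : ℕ → TwoNFA F.alph, PolySize2 M ∧ AcceptFew2 M F.prob ∧
        WeaklyUnambiguous2 M F.prob ∧ Solves2 M F.prob}

def twoReachU : Set Family :=
  {F | ∃ M : ℕ → TwoNFA F.alph, PolySize2 M ∧ AcceptFew2 M F.prob ∧
        ReachUnambiguous2 M F.prob ∧ Solves2 M F.prob}

def twoReachFew : Set Family :=
  {F | ∃ M : ℕ → TwoNFA F.alph, PolySize2 M ∧ AcceptFew2 M F.prob ∧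
        ReachFew2 M F.prob ∧ Solves2 M F.prob}

def twoReachFewU : Set Family :=
  {F | ∃ M : ℕ → TwoNFA F.alph, PolySize2 M ∧ AcceptFew2 M F.prob ∧
        ReachFew2 M F.prob ∧ WeaklyUnambiguous2 M F.prob ∧ Solves2 M F.prob}

/-! ## Ceilings -/

/-- The family `F` has an `f(n)`-ceiling. -/
def HasCeiling (F : Family) (f : ℕ → ℕ) : Prop :=
  ∀ n, ∀ x ∈ F.prob.valid n, x.length ≤ f n

/-- The restriction `C/F` of a class `C` to families having an `f`-ceiling for some `f ∈ S`. -/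
def ceil (C : Set Family) (S : Set (ℕ → ℕ)) : Set Family :=
  {F | F ∈ C ∧ ∃ f ∈ S, HasCeiling F f}

def polyFuns : Set (ℕ → ℕ) := {f | ∃ p : Polynomial ℕ, ∀ n, f n = p.eval n}

/-- Super-exponential functions: `f(n) > 2^{p(n)}` for all but finitely many `n`,
for every polynomial `p`. -/
def supexpFuns : Set (ℕ → ℕ) :=
  {f | ∀ p : Polynomial ℕ, ∃ N, ∀ n ≥ N, 2 ^ p.eval n < f n}

/-- `F` has a logarithmic ceiling `ℓ(n) = a·log₂ n + b` with constants `a, b ≥ 0`. -/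
def HasLogCeiling (F : Family) : Prop :=
  ∃ a b : ℝ, 0 ≤ a ∧ 0 ≤ b ∧
    ∀ n, ∀ x ∈ F.prob.valid n, (x.length : ℝ) ≤ a * Real.logb 2 n + b

/-- The restriction `C/log` of a class `C` to families having logarithmic ceilings. -/
def ceilLog (C : Set Family) : Set Family := {F | F ∈ C ∧ HasLogCeiling F}
/-! ## The alphabet `{0, 1, #}` and encodings -/

inductive Sym3 : Type
  | zero | one | hash
deriving DecidableEq

instance : Fintype Sym3 :=
  ⟨{Sym3.zero, Sym3.one, Sym3.hash}, by intro x; cases x <;> simp⟩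

/-- The block `1^i 0^{m-i}`. -/
def block (m i : ℕ) : List Sym3 :=
  List.replicate i Sym3.one ++ List.replicate (m - i) Sym3.zero

lemma block_length {m i : ℕ} (h : i ≤ m) : (block m i).length = m := by
  simp [block]; omega

lemma block_count {m : ℕ} (i : ℕ) : (block m i).count Sym3.one = i := by
  simp [block, List.count_append, List.count_replicate]

lemma block_inj {m i j : ℕ} (h : block m i = block m j) : i = j := by
  have := block_count (m := m) i
  rw [h, block_count] at this
  omega

/-- The encoding `[[i₁,…,i_k]]_m` of a list of numbers. -/
def enc (m : ℕ) : List ℕ → List Sym3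
  | [] => []
  | [i] => block m i
  | i :: j :: rest => block m i ++ Sym3.zero :: enc m (j :: rest)

/-- Lists of length `k` with entries in `[n]`. -/
def ValidList (n k : ℕ) (l : List ℕ) : Prop :=
  l.length = k ∧ ∀ i ∈ l, 1 ≤ i ∧ i ≤ n

lemma enc_length {m : ℕ} :
    ∀ l : List ℕ, (∀ i ∈ l, i ≤ m) → (enc m l).length = l.length * (m + 1) - 1
  | [] => by simp [enc]
  | [i] => by
      intro h
      simp [enc, block_length (h i (by simp))]
  | i :: j :: rest => by
      intro h
      have ih := enc_length (j :: rest) (fun a ha => h a (List.mem_cons_of_mem _ ha))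
      have hb : (block m i).length = m := block_length (h i (List.mem_cons_self))
      show (block m i ++ Sym3.zero :: enc m (j :: rest)).length = _
      rw [List.length_append, hb, List.length_cons, ih]
      have hc : (i :: j :: rest).length = (j :: rest).length + 1 := by simp
      rw [hc]
      set L := (j :: rest).length with hLdef
      have hL : 1 ≤ L := by simp [hLdef]
      have h1 : (L + 1) * (m + 1) = L * (m + 1) + (m + 1) := by ring
      rw [h1]
      set P := L * (m + 1) with hPdef
      have hP : 1 ≤ P := by
        have := Nat.mul_le_mul hL (Nat.le_add_left 1 m)
        simpa [hPdef] using this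
      omega

lemma enc_ne_nil {m : ℕ} (i : ℕ) (rest : List ℕ) (hi : 1 ≤ i) :
    enc m (i :: rest) ≠ [] := by
  cases rest with
  | nil =>
      simp only [enc, block]
      intro h
      have := congrArg List.length h
      simp at this
      omega
  | cons j rest' =>
      simp only [enc]
      intro h
      have := congrArg List.length h
      simp at this

lemma enc_inj {m : ℕ} :
    ∀ u w : List ℕ, (∀ i ∈ u, 1 ≤ i ∧ i ≤ m) → (∀ i ∈ w, 1 ≤ i ∧ i ≤ m) →
      enc m u = enc m w → u = w
  | [], [], _, _, _ => rfl
  | [], j :: w', _, hw, h => by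
      exact absurd h.symm (enc_ne_nil j w' (hw j (by simp)).1)
  | i :: u', [], hu, _, h => by
      exact absurd h (enc_ne_nil i u' (hu i (by simp)).1)
  | [i], [j], hu, hw, h => by
      simp only [enc] at h
      rw [block_inj h]
  | [i], j :: b :: w', hu, hw, h => by
      exfalso
      have hl := congrArg List.length h
      rw [show enc m [i] = block m i from rfl,
        show enc m (j :: b :: w') = block m j ++ Sym3.zero :: enc m (b :: w') from rfl] at hl
      rw [List.length_append, List.length_cons,
        block_length (hu i (by simp)).2, block_length (hw j (by simp)).2] at hl
      omega
  | i :: a :: u', [j], hu, hw, h => by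
      exfalso
      have hl := congrArg List.length h
      rw [show enc m [j] = block m j from rfl,
        show enc m (i :: a :: u') = block m i ++ Sym3.zero :: enc m (a :: u') from rfl] at hl
      rw [List.length_append, List.length_cons,
        block_length (hu i (by simp)).2, block_length (hw j (by simp)).2] at hl
      omega
  | i :: a :: u', j :: b :: w', hu, hw, h => by
      rw [show enc m (i :: a :: u') = block m i ++ Sym3.zero :: enc m (a :: u') from rfl,
        show enc m (j :: b :: w') = block m j ++ Sym3.zero :: enc m (b :: w') from rfl] at h
      have hlen : (block m i).length = (block m j).length := by
        rw [block_length (hu i (by simp)).2, block_length (hw j (by simp)).2]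
      obtain ⟨h1, h2⟩ := List.append_inj h hlen
      have h3 : enc m (a :: u') = enc m (b :: w') := by
        simpa using h2
      have ih := enc_inj (a :: u') (b :: w')
        (fun x hx => hu x (List.mem_cons_of_mem _ hx))
        (fun x hx => hw x (List.mem_cons_of_mem _ hx)) h3
      rw [block_inj h1, ih]
/-! ## The promise problem family `L₁` -/

def L1pos (n : ℕ) : Set (List Sym3) :=
  {x | ∃ u v : List ℕ, ValidList n n u ∧ ValidList n n v ∧ u ≠ v ∧
        x = enc n u ++ Sym3.hash :: enc n v}

def L1neg (n : ℕ) : Set (List Sym3) :=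
  {x | ∃ u v : List ℕ, ValidList n n u ∧ ValidList n n v ∧ u = v ∧
        x = enc n u ++ Sym3.hash :: enc n v}

lemma L1_disj (n : ℕ) : Disjoint (L1pos n) (L1neg n) := by
  rw [Set.disjoint_left]
  rintro x ⟨u, v, hu, hv, huv, rfl⟩ ⟨u', v', hu', hv', huv', heq⟩
  have hlen : (enc n u).length = (enc n u').length := by
    rw [enc_length u (fun i hi => (hu.2 i hi).2),
      enc_length u' (fun i hi => (hu'.2 i hi).2), hu.1, hu'.1]
  obtain ⟨h1, h2⟩ := List.append_inj heq hlen
  have h2' : enc n v = enc n v' := by simpa using h2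
  have e1 : u = u' := enc_inj u u' hu.2 hu'.2 h1
  have e2 : v = v' := enc_inj v v' hv.2 hv'.2 h2'
  exact huv (by rw [e1, e2, huv'])

def L1prob : PromiseFamily Sym3 := ⟨L1pos, L1neg, L1_disj⟩

def L1fam : Family := { alph := Sym3, prob := L1prob }

/-! ## Matrices, their encodings, and the promise problem family `L₂` -/

/-- `R` represents an `n × n` matrix with entries in `[n]`, given as its list of rows. -/
def ValidMat (n : ℕ) (R : List (List ℕ)) : Prop :=
  R.length = n ∧ ∀ r ∈ R, ValidList n n r

/-- The encoding `[[D]]_n` of a matrix: its encoded rows joined by `#`. -/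
def encMat (n : ℕ) : List (List ℕ) → List Sym3
  | [] => []
  | [r] => enc n r
  | r :: s :: rest => enc n r ++ Sym3.hash :: encMat n (s :: rest)

lemma encMat_len {n : ℕ} :
    ∀ R : List (List ℕ), (∀ r ∈ R, ValidList n n r) →
      (encMat n R).length = R.length * (n * (n + 1) - 1 + 1) - 1
  | [] => by simp [encMat]
  | [r] => by
      intro h
      have hr := h r (by simp)
      have he : (enc n r).length = n * (n + 1) - 1 := by
        rw [enc_length r (fun i hi => (hr.2 i hi).2), hr.1]
      show (enc n r).length = ([r] : List (List ℕ)).length * (n * (n + 1) - 1 + 1) - 1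
      rw [he, show ([r] : List (List ℕ)).length = 1 from rfl]
      omega
  | r :: s :: rest => by
      intro h
      have ih := encMat_len (s :: rest) (fun a ha => h a (List.mem_cons_of_mem _ ha))
      have hr := h r (by simp)
      have he : (enc n r).length = n * (n + 1) - 1 := by
        rw [enc_length r (fun i hi => (hr.2 i hi).2), hr.1]
      show (enc n r ++ Sym3.hash :: encMat n (s :: rest)).length = _
      rw [List.length_append, he, List.length_cons, ih]
      have hc : (r :: s :: rest).length = (s :: rest).length + 1 := by simp
      rw [hc]
      set e := n * (n + 1) - 1 with hedef
      set L := (s :: rest).length with hLdef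
      have hL : 1 ≤ L := by simp [hLdef]
      have h1 : (L + 1) * (e + 1) = L * (e + 1) + (e + 1) := by ring
      rw [h1]
      set P := L * (e + 1) with hPdef
      have hP : 1 ≤ P := by
        calc 1 = 1 * 1 := by ring
        _ ≤ L * (e + 1) := Nat.mul_le_mul hL (by omega)
      omega

lemma encMat_inj {n : ℕ} :
    ∀ R W : List (List ℕ), (∀ r ∈ R, ValidList n n r) → (∀ r ∈ W, ValidList n n r) →
      R.length = W.length → encMat n R = encMat n W → R = W
  | [], [], _, _, _, _ => rfl
  | [], _ :: _, _, _, hl, _ => by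
      simp only [List.length_cons, List.length_nil] at hl
      omega
  | _ :: _, [], _, _, hl, _ => by
      simp only [List.length_cons, List.length_nil] at hl
      omega
  | [r], [w], hR, hW, _, h => by
      have := enc_inj r w (hR r (by simp)).2 (hW w (by simp)).2 h
      rw [this]
  | [r], w :: w' :: W', _, _, hl, _ => by
      simp only [List.length_cons, List.length_nil] at hl
      omega
  | r :: r' :: R', [w], _, _, hl, _ => by
      simp only [List.length_cons, List.length_nil] at hl
      omega
  | r :: r' :: R', w :: w' :: W', hR, hW, hl, h => by
      rw [show encMat n (r :: r' :: R') = enc n r ++ Sym3.hash :: encMat n (r' :: R') from rfl,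
        show encMat n (w :: w' :: W') = enc n w ++ Sym3.hash :: encMat n (w' :: W') from rfl] at h
      have hrlen : (enc n r).length = (enc n w).length := by
        have h1 := hR r (by simp); have h2 := hW w (by simp)
        rw [enc_length r (fun i hi => (h1.2 i hi).2),
          enc_length w (fun i hi => (h2.2 i hi).2), h1.1, h2.1]
      obtain ⟨h1, h2⟩ := List.append_inj h hrlen
      have h3 : encMat n (r' :: R') = encMat n (w' :: W') := by simpa using h2
      have ihr := enc_inj r w (hR r (by simp)).2 (hW w (by simp)).2 h1
      have ih := encMat_inj (r' :: R') (w' :: W')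
        (fun a ha => hR a (List.mem_cons_of_mem _ ha))
        (fun a ha => hW a (List.mem_cons_of_mem _ ha))
        (by simpa using hl) h3
      rw [ihr, ih]

/-- `SelSum R s` holds iff `s` is obtained by choosing one entry from each row of `R`
(the value `sum_D(σ)` for some choice function `σ`). -/
inductive SelSum : List (List ℕ) → ℕ → Prop
  | nil : SelSum [] 0
  | cons {a : ℕ} {r : List ℕ} {rest : List (List ℕ)} {s : ℕ} :
      a ∈ r → SelSum rest s → SelSum (r :: rest) (a + s)

def L2pos (n : ℕ) : Set (List Sym3) :=
  {x | ∃ R R' : List (List ℕ), ValidMat n R ∧ ValidMat n R' ∧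
        (∃ s : ℕ, SelSum R s ∧ SelSum R' s) ∧
        x = encMat n R ++ Sym3.hash :: Sym3.hash :: encMat n R'}

def L2neg (n : ℕ) : Set (List Sym3) :=
  {x | ∃ R R' : List (List ℕ), ValidMat n R ∧ ValidMat n R' ∧
        (∀ s s' : ℕ, SelSum R s → SelSum R' s' → s ≠ s') ∧
        x = encMat n R ++ Sym3.hash :: Sym3.hash :: encMat n R'}

lemma L2_disj (n : ℕ) : Disjoint (L2pos n) (L2neg n) := by
  rw [Set.disjoint_left]
  rintro x ⟨R, R', hR, hR', ⟨s, hs, hs'⟩, rfl⟩ ⟨W, W', hW, hW', hne, heq⟩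
  have hlen : (encMat n R).length = (encMat n W).length := by
    rw [encMat_len R hR.2, encMat_len W hW.2, hR.1, hW.1]
  obtain ⟨h1, h2⟩ := List.append_inj heq hlen
  have h2' : encMat n R' = encMat n W' := by simpa using h2
  have e1 : R = W := encMat_inj R W hR.2 hW.2 (by rw [hR.1, hW.1]) h1
  have e2 : R' = W' := encMat_inj R' W' hR'.2 hW'.2 (by rw [hR'.1, hW'.1]) h2'
  exact hne s s (e1 ▸ hs) (e2 ▸ hs') rfl

def L2prob : PromiseFamily Sym3 := ⟨L2pos, L2neg, L2_disj⟩

def L2fam : Family := { alph := Sym3, prob := L2prob }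
/-! ## One-way probabilistic finite automata data -/

/-- Product of the matrices of the symbols of a word. -/
noncomputable def wordMatrix {α Q : Type} [Fintype Q] [DecidableEq Q]
    (Mσ : TapeSym α → Matrix Q Q ℝ) (w : List (TapeSym α)) : Matrix Q Q ℝ :=
  (w.map Mσ).prod

/-- The tape word `▷ x ◁`. -/
def tapeWord {α : Type} (x : List α) : List (TapeSym α) :=
  Sum.inr false :: (x.map Sum.inl ++ [Sum.inr true])

/-- `p_{acc}(x : q)`: the `q`-entry of the row vector `ν · M_{▷x◁}`. -/
noncomputable def pacc {α Q : Type} [Fintype Q] [DecidableEq Q]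
    (ν : Q → ℝ) (Mσ : TapeSym α → Matrix Q Q ℝ) (x : List α) (q : Q) : ℝ :=
  Matrix.vecMul ν (wordMatrix Mσ (tapeWord x)) q

noncomputable def qseq : ℕ → ℕ
  | 0 => 2
  | (i+1) =>
    if h : 2 * qseq i ≠ 0 then
      (Nat.exists_prime_lt_and_le_two_mul (2 * qseq i) h).choose
    else 3

lemma qseq_spec (i : ℕ) :
    (qseq i).Prime ∧ 2 ^ (i+1) ≤ qseq i ∧ qseq i ≤ 4 ^ (i+1) ∧
      (∀ j, j < i → 2 * qseq j < qseq (j+1)) := by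
  induction i with
  | zero => refine ⟨Nat.prime_two, by norm_num [qseq], by norm_num [qseq], by omega⟩
  | succ i ih =>
    obtain ⟨hp, hlb, hub, hmono⟩ := ih
    have h0 : 2 * qseq i ≠ 0 := by have := hp.two_le; omega
    have hs := (Nat.exists_prime_lt_and_le_two_mul (2 * qseq i) h0).choose_spec
    have hq : qseq (i+1) = (Nat.exists_prime_lt_and_le_two_mul (2 * qseq i) h0).choose := by
      simp [qseq, h0]
    rw [← hq] at hs
    refine ⟨hs.1, ?_, ?_, ?_⟩
    · have : 2 ^ (i+2) = 2 * 2 ^ (i+1) := by ring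
      omega
    · have : 4 ^ (i+2) = 4 * 4 ^ (i+1) := by ring
      omega
    · intro j hj
      rcases Nat.lt_succ_iff_lt_or_eq.mp hj with h | h
      · exact hmono j h
      · subst h; exact hs.2.1

lemma qseq_prime (i : ℕ) : (qseq i).Prime := (qseq_spec i).1
lemma qseq_lb (i : ℕ) : 2 ^ (i+1) ≤ qseq i := (qseq_spec i).2.1
lemma qseq_ub (i : ℕ) : qseq i ≤ 4 ^ (i+1) := (qseq_spec i).2.2.1

lemma qseq_strictMono : StrictMono qseq := by
  apply strictMono_nat_of_lt_succ
  intro i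
  have := ((qseq_spec (i+1)).2.2.2) i (by omega)
  have h2 := (qseq_prime i).two_le
  omega

instance qseq_nezero (i : ℕ) : NeZero (qseq i) := ⟨(qseq_prime i).ne_zero⟩

/-- number of primes used at parameter `n` -/
def kk (n : ℕ) : ℕ := Nat.log 4 n + 1

/-- the hard length -/
noncomputable def NN (n : ℕ) : ℕ := ∏ i ∈ Finset.range (kk n), qseq i

lemma prod_qseq_lb (k : ℕ) :
    2 ^ (∑ i ∈ Finset.range k, (i+1)) ≤ ∏ i ∈ Finset.range k, qseq i := by
  induction k with
  | zero => simp
  | succ k ih =>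
    rw [Finset.prod_range_succ, Finset.sum_range_succ, pow_add]
    exact Nat.mul_le_mul ih (qseq_lb k)

lemma NN_ge_two (n : ℕ) : 2 ≤ NN n := by
  have := prod_qseq_lb (kk n)
  have h1 : 1 ≤ ∑ i ∈ Finset.range (kk n), (i+1) := by
    have : kk n = Nat.log 4 n + 1 := rfl
    rw [this, Finset.sum_range_succ]
    omega
  calc 2 = 2 ^ 1 := rfl
  _ ≤ 2 ^ (∑ i ∈ Finset.range (kk n), (i+1)) := Nat.pow_le_pow_right (by norm_num) h1
  _ ≤ NN n := this

lemma qseq_dvd_NN {n i : ℕ} (h : i < kk n) : qseq i ∣ NN n :=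
  Finset.dvd_prod_of_mem _ (Finset.mem_range.mpr h)

lemma prod_qseq_dvd {m : ℕ} : ∀ k, (∀ i, i < k → qseq i ∣ m) →
    (∏ i ∈ Finset.range k, qseq i) ∣ m := by
  intro k
  induction k with
  | zero => simp
  | succ k ih =>
    intro h
    rw [Finset.prod_range_succ]
    refine Nat.Coprime.mul_dvd_of_dvd_of_dvd ?_ (ih fun i hi => h i (by omega))
      (h k (by omega))
    refine Nat.coprime_prod_left_iff.mpr fun i hi => ?_
    exact (Nat.coprime_primes (qseq_prime i) (qseq_prime k)).mpr
      (qseq_strictMono.injective.ne (by simp at hi; omega))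

lemma NN_dvd {n m : ℕ} (h : ∀ i, i < kk n → qseq i ∣ m) : NN n ∣ m :=
  prod_qseq_dvd _ h

lemma qseq_le_of_lt_kk {n i : ℕ} (h : i < kk n) : qseq i ≤ 4 * n + 4 := by
  have h1 : qseq i ≤ 4 ^ (i+1) := qseq_ub i
  have h3 : (4:ℕ) ^ (i+1) ≤ 4 ^ (kk n) := Nat.pow_le_pow_right (by norm_num) h
  have h4 : (4:ℕ) ^ (kk n) = 4 * 4 ^ (Nat.log 4 n) := by rw [kk, pow_succ]; ring
  rcases Nat.eq_zero_or_pos n with rfl | hn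
  · have : Nat.log 4 0 = 0 := by simp
    rw [this] at h4
    norm_num at h4
    omega
  · have h5 := Nat.pow_log_le_self 4 (by omega : n ≠ 0)
    have : (4:ℕ) ^ (kk n) ≤ 4 * n := by rw [h4]; omega
    omega

lemma tri_sum (K : ℕ) : 2 * ∑ i ∈ Finset.range K, (i+1) = K * (K+1) := by
  induction K with
  | zero => simp
  | succ K ih => rw [Finset.sum_range_succ, Nat.mul_add, ih]; ring

lemma poly_eval_le (P : Polynomial ℕ) (n : ℕ) (hn : 1 ≤ n) :
    P.eval n ≤ (∑ i ∈ Finset.range (P.natDegree + 1), P.coeff i) * n ^ P.natDegree := by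
  rw [Polynomial.eval_eq_sum_range, Finset.sum_mul]
  refine Finset.sum_le_sum fun i hi => ?_
  exact Nat.mul_le_mul_left _ (Nat.pow_le_pow_right hn (by
    have := Finset.mem_range.mp hi; omega))

lemma NN_superpoly (P : Polynomial ℕ) : ∃ n, P.eval n < NN n := by
  set d := P.natDegree
  set C := ∑ i ∈ Finset.range (d + 1), P.coeff i with hC
  set K := 2 * C + 4 * d + 4 with hK
  refine ⟨4 ^ K, ?_⟩
  have hn1 : 1 ≤ 4 ^ K := Nat.one_le_pow _ _ (by norm_num)
  have hkk : kk (4 ^ K) = K + 1 := by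
    rw [kk, Nat.log_pow (by norm_num)]
  have hNN : 2 ^ (∑ i ∈ Finset.range (K+1), (i+1)) ≤ NN (4 ^ K) := by
    show 2 ^ (∑ i ∈ Finset.range (K+1), (i+1)) ≤ ∏ i ∈ Finset.range (kk (4 ^ K)), qseq i
    rw [hkk]; exact prod_qseq_lb (K+1)
  set T := ∑ i ∈ Finset.range (K+1), (i+1) with hT
  have hTval : 2 * T = (K+1) * (K+2) := tri_sum (K+1)
  have h1 : P.eval (4 ^ K) ≤ C * (4 ^ K) ^ d := poly_eval_le P _ hn1
  have h2 : C * (4 ^ K) ^ d < 2 ^ (C + 2 * K * d + 1) := by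
    have hc : C < 2 ^ C := Nat.lt_two_pow_self
    have hpow : (4:ℕ) ^ K = 2 ^ (2 * K) := by
      rw [show (4:ℕ) = 2 ^ 2 by norm_num, ← pow_mul]
    rw [hpow, ← pow_mul]
    calc C * 2 ^ (2 * K * d) < 2 ^ C * 2 ^ (2 * K * d) :=
          Nat.mul_lt_mul_of_lt_of_le hc (le_refl _) (Nat.pow_pos (by norm_num))
      _ = 2 ^ (C + 2 * K * d) := by rw [← pow_add]
      _ < 2 ^ (C + 2 * K * d + 1) := Nat.pow_lt_pow_right (by norm_num) (by omega)
  have h3 : C + 2 * K * d + 1 ≤ T := by nlinarith [hTval, hK]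
  calc P.eval (4 ^ K) < 2 ^ (C + 2 * K * d + 1) := lt_of_le_of_lt h1 h2
    _ ≤ 2 ^ T := Nat.pow_le_pow_right (by norm_num) h3
    _ ≤ NN (4 ^ K) := hNN

/-! ## The hard unary family -/

def Fpos (n : ℕ) : Set (List Unit) := {x | x.length = NN n}
def Fneg (n : ℕ) : Set (List Unit) := {x | 1 ≤ x.length ∧ x.length < NN n}

lemma F_disj (n : ℕ) : Disjoint (Fpos n) (Fneg n) := by
  rw [Set.disjoint_left]
  rintro x h1 h2
  rw [Fpos, Set.mem_setOf_eq] at h1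
  rw [Fneg, Set.mem_setOf_eq] at h2
  omega

noncomputable def Fprob : PromiseFamily Unit := ⟨Fpos, Fneg, F_disj⟩

noncomputable def Ffam : Family := { alph := Unit, prob := Fprob }

/-! ## The mod-counting machine -/

abbrev MQ (n : ℕ) : Type := Unit ⊕ (Σ i : Fin (kk n), ZMod (qseq i))

lemma kk_pos (n : ℕ) : 0 < kk n := by rw [kk]; omega

noncomputable def Mach (n : ℕ) : OneNFA Unit where
  Q := MQ n
  start := Sum.inl ()
  next := fun q _ =>
    match q with
    | Sum.inl _ => {s | ∃ i : Fin (kk n), s = Sum.inr ⟨i, 1⟩}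
    | Sum.inr ⟨i, r⟩ => {Sum.inr ⟨i, r + 1⟩}
  next_nonempty := by
    rintro (u | ⟨i, r⟩) a
    · exact ⟨Sum.inr ⟨⟨0, kk_pos n⟩, 1⟩, ⟨⟨0, kk_pos n⟩, rfl⟩⟩
    · exact ⟨Sum.inr ⟨i, r + 1⟩, rfl⟩
  acc := {s | ∃ (i : Fin (kk n)) (r : ZMod (qseq i)), r ≠ 0 ∧ s = Sum.inr ⟨i, r⟩}

lemma mach_next_inl {n : ℕ} (u : Unit) (a : Unit) :
    (Mach n).next (Sum.inl u) a = {s | ∃ i : Fin (kk n), s = Sum.inr ⟨i, 1⟩} := rfl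

lemma mach_next_inr {n : ℕ} (i : Fin (kk n)) (r : ZMod (qseq i)) (a : Unit) :
    (Mach n).next (Sum.inr ⟨i, r⟩) a = {Sum.inr ⟨i, r + 1⟩} := rfl

/-- Canonical state at position `j` in branch `i`. -/
noncomputable def canonSt (n : ℕ) (i : Fin (kk n)) (j : ℕ) : MQ n :=
  if j = 0 then Sum.inl () else Sum.inr ⟨i, (j : ZMod (qseq i))⟩

lemma canon_isPath (n : ℕ) (x : List Unit) (i : Fin (kk n)) :
    (Mach n).IsPath x (fun j => canonSt n i j.val) := by
  constructor
  · show canonSt n i (0 : Fin (x.length + 1)).val = (Mach n).start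
    simp [canonSt]
    rfl
  · intro j
    show canonSt n i j.succ.val ∈ (Mach n).next (canonSt n i j.castSucc.val) (x.get j)
    have hc : j.castSucc.val = j.val := rfl
    have hs : j.succ.val = j.val + 1 := rfl
    rw [hc, hs]
    rcases Nat.eq_zero_or_pos j.val with h | h
    · rw [h]
      have e1 : canonSt n i 0 = Sum.inl () := by simp [canonSt]
      have e2 : canonSt n i 1 = Sum.inr ⟨i, 1⟩ := by simp [canonSt]
      rw [e1, e2, mach_next_inl]
      exact ⟨i, rfl⟩
    · have e1 : canonSt n i j.val = Sum.inr ⟨i, (j.val : ZMod (qseq i))⟩ := by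
        simp [canonSt]; omega
      have e2 : canonSt n i (j.val + 1)
          = Sum.inr ⟨i, ((j.val : ZMod (qseq i)) + 1)⟩ := by
        simp [canonSt]
      rw [e1, e2, mach_next_inr]
      rfl

lemma path_char {n : ℕ} {x : List Unit} {p : Fin (x.length + 1) → (Mach n).Q}
    (hp : (Mach n).IsPath x p) (hx : 1 ≤ x.length) :
    ∃ i : Fin (kk n), ∀ j : Fin (x.length + 1), p j = canonSt n i j.val := by
  obtain ⟨h0, hstep⟩ := hp
  have h1 := hstep ⟨0, hx⟩
  have hcast0 : (⟨0, hx⟩ : Fin x.length).castSucc = 0 := by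
    apply Fin.ext; simp
  rw [hcast0, h0] at h1
  rw [show (Mach n).start = Sum.inl () from rfl, mach_next_inl] at h1
  obtain ⟨i, hi⟩ := h1
  refine ⟨i, ?_⟩
  have key : ∀ jv (hj : jv < x.length + 1), p ⟨jv, hj⟩ = canonSt n i jv := by
    intro jv
    induction jv with
    | zero =>
      intro hj
      have : (⟨0, hj⟩ : Fin (x.length + 1)) = 0 := by apply Fin.ext; simp
      rw [this, h0]
      simp [canonSt]
      rfl
    | succ jv ih =>
      intro hj
      rcases Nat.eq_zero_or_pos jv with h | h
      · subst h
        have : (⟨1, hj⟩ : Fin (x.length + 1)) = (⟨0, hx⟩ : Fin x.length).succ := by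
          apply Fin.ext; simp
        rw [this, hi]
        simp [canonSt]
        rfl
      · have hjv : jv < x.length := by omega
        have hs := hstep ⟨jv, hjv⟩
        have e1 : (⟨jv, hjv⟩ : Fin x.length).castSucc = ⟨jv, by omega⟩ := rfl
        have e2 : (⟨jv, hjv⟩ : Fin x.length).succ = ⟨jv + 1, hj⟩ := rfl
        rw [e1, e2, ih (by omega)] at hs
        have e3 : canonSt n i jv = Sum.inr ⟨i, (jv : ZMod (qseq i))⟩ := by
          simp [canonSt]; omega
        rw [e3, mach_next_inr] at hs
        have : p ⟨jv + 1, hj⟩ = Sum.inr ⟨i, (jv : ZMod (qseq i)) + 1⟩ := hs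
        rw [this]
        simp [canonSt]
        rfl
  intro j
  exact key j.val j.isLt

lemma inr_eq_inr {n : ℕ} {i i' : Fin (kk n)} {r : ZMod (qseq i)} {r' : ZMod (qseq i')}
    (h : (Sum.inr ⟨i, r⟩ : MQ n) = Sum.inr ⟨i', r'⟩) : i = i' ∧ HEq r r' := by
  injection h with h2
  exact ⟨congrArg Sigma.fst h2, (Sigma.mk.inj_iff.mp h2).2⟩

/-- Any two paths on the same input ending in the same state coincide. -/
lemma mach_reach_unamb (n : ℕ) (y : List Unit) (q : (Mach n).Q) :
    {p : Fin (y.length + 1) → (Mach n).Q |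
      (Mach n).IsPath y p ∧ p (Fin.last y.length) = q}.Subsingleton := by
  intro p hp p' hp'
  rcases Nat.eq_zero_or_pos y.length with hy | hy
  · funext j
    have hj : j = 0 := by apply Fin.ext; have := j.isLt; simp; omega
    rw [hj, hp.1.1, hp'.1.1]
  · obtain ⟨i, hpi⟩ := path_char hp.1 hy
    obtain ⟨i', hpi'⟩ := path_char hp'.1 hy
    have hlast : canonSt n i (Fin.last y.length).val = canonSt n i' (Fin.last y.length).val := by
      rw [← hpi, ← hpi', hp.2, hp'.2]
    have hlv : (Fin.last y.length).val = y.length := rfl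
    rw [hlv] at hlast
    have hii : i = i' := by
      have e : canonSt n i y.length = Sum.inr ⟨i, (y.length : ZMod (qseq i))⟩ := by
        simp only [canonSt]; rw [if_neg (by omega)]
      have e' : canonSt n i' y.length = Sum.inr ⟨i', (y.length : ZMod (qseq i'))⟩ := by
        simp only [canonSt]; rw [if_neg (by omega)]
      rw [e, e'] at hlast
      exact (inr_eq_inr hlast).1
    funext j
    rw [hpi j, hpi' j, hii]

lemma exists_nondvd {n m : ℕ} (h1 : 1 ≤ m) (h2 : m < NN n) :
    ∃ i : Fin (kk n), ¬ qseq (i : ℕ) ∣ m := by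
  by_contra h
  push_neg at h
  have hdvd : NN n ∣ m := NN_dvd fun i hi => h ⟨i, hi⟩
  have := Nat.le_of_dvd (by omega) hdvd
  omega

lemma canon_acc (n : ℕ) (x : List Unit) (i : Fin (kk n)) (h1 : 1 ≤ x.length)
    (hnd : ¬ qseq (i : ℕ) ∣ x.length) :
    (Mach n).IsAccPath x (fun j => canonSt n i j.val) := by
  refine ⟨canon_isPath n x i, ?_⟩
  show canonSt n i (Fin.last x.length).val ∈ (Mach n).acc
  have e : canonSt n i (Fin.last x.length).val
      = Sum.inr ⟨i, (x.length : ZMod (qseq i))⟩ := by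
    simp only [canonSt, Fin.val_last]; rw [if_neg (by omega)]
  rw [e]
  refine ⟨i, (x.length : ZMod (qseq i)), ?_, rfl⟩
  rw [Ne, ZMod.natCast_eq_zero_iff]
  exact hnd

lemma mach_rejects (n : ℕ) (x : List Unit) (hx : x.length = NN n) :
    ¬ (Mach n).Accepts x := by
  rintro ⟨p, hpath, hacc⟩
  have h2 := NN_ge_two n
  have h1 : 1 ≤ x.length := by omega
  obtain ⟨i, hpi⟩ := path_char hpath h1
  rw [hpi] at hacc
  have e : canonSt n i (Fin.last x.length).val
      = Sum.inr ⟨i, (x.length : ZMod (qseq i))⟩ := by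
    simp only [canonSt, Fin.val_last]; rw [if_neg (by omega)]
  rw [e] at hacc
  obtain ⟨i', r', hr', heq⟩ := hacc
  obtain ⟨hii, hh⟩ := inr_eq_inr heq
  subst hii
  have hrr : (x.length : ZMod (qseq i)) = r' := eq_of_heq hh
  apply hr'
  rw [← hrr, ZMod.natCast_eq_zero_iff, hx]
  exact qseq_dvd_NN i.isLt

lemma mach_acc_ncard (n : ℕ) (x : List Unit) :
    {p | (Mach n).IsAccPath x p}.ncard ≤ kk n := by
  rcases Nat.eq_zero_or_pos x.length with h | h
  · have hempty : {p | (Mach n).IsAccPath x p} = ∅ := by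
      ext p
      simp only [Set.mem_setOf_eq, Set.mem_empty_iff_false, iff_false]
      rintro ⟨hpath, hacc⟩
      have hl : Fin.last x.length = 0 := by apply Fin.ext; simp [h]
      rw [hl, hpath.1] at hacc
      obtain ⟨i, r, hr, heq⟩ := hacc
      rw [show (Mach n).start = Sum.inl () from rfl] at heq
      cases heq
    rw [hempty]
    simp
  · calc {p | (Mach n).IsAccPath x p}.ncard
        ≤ (Set.range fun i : Fin (kk n) =>
            (fun j : Fin (x.length + 1) => canonSt n i j.val)).ncard := by
          refine Set.ncard_le_ncard ?_ (Set.finite_range _)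
          intro p hp
          obtain ⟨i, hpi⟩ := path_char hp.1 h
          exact ⟨i, by funext j; rw [hpi j]⟩
      _ ≤ kk n := by
          rw [← Set.image_univ]
          calc (Set.image _ Set.univ).ncard
              ≤ (Set.univ : Set (Fin (kk n))).ncard := Set.ncard_image_le Set.finite_univ
            _ = kk n := by rw [Set.ncard_univ, Nat.card_eq_fintype_card, Fintype.card_fin]

lemma kk_le (n : ℕ) : kk n ≤ n + 1 := by
  rw [kk]
  have := Nat.log_le_self 4 n
  omega

lemma mach_sc (n : ℕ) : (Mach n).sc ≤ 4 * n ^ 2 + 8 * n + 5 := by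
  have hcard : (Mach n).sc = 1 + ∑ i : Fin (kk n), qseq (i : ℕ) := by
    show Fintype.card (MQ n) = _
    rw [Fintype.card_sum, Fintype.card_sigma]
    simp [ZMod.card]
  have hsum : ∑ i : Fin (kk n), qseq (i : ℕ) ≤ kk n * (4 * n + 4) := by
    have := Finset.sum_le_card_nsmul Finset.univ (fun i : Fin (kk n) => qseq (i : ℕ))
      (4 * n + 4) (fun i _ => qseq_le_of_lt_kk i.isLt)
    simpa [smul_eq_mul] using this
  have hk := kk_le n
  have : kk n * (4 * n + 4) ≤ (n + 1) * (4 * n + 4) :=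
    Nat.mul_le_mul_right _ hk
  nlinarith

theorem FfamCo_mem : Ffam.co ∈ oneReachU := by
  refine ⟨Mach, ?_, ?_, ?_, ?_⟩
  · refine ⟨Polynomial.C 4 * Polynomial.X ^ 2 + Polynomial.C 8 * Polynomial.X
      + Polynomial.C 5, fun n => ?_⟩
    calc (Mach n).sc ≤ 4 * n ^ 2 + 8 * n + 5 := mach_sc n
      _ = _ := by simp
  · refine ⟨MvPolynomial.X 0 + MvPolynomial.C 1, fun n x _ => ?_⟩
    calc {p | (Mach n).IsAccPath x p}.ncard ≤ kk n := mach_acc_ncard n x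
      _ ≤ n + 1 := kk_le n
      _ = _ := by simp
  · intro n x _ i _ q
    exact mach_reach_unamb n (x.take i) q
  · intro n
    constructor
    · rintro x ⟨h1, h2⟩
      obtain ⟨i, hi⟩ := exists_nondvd h1 h2
      exact ⟨_, canon_acc n x i h1 hi⟩
    · intro x hx
      exact mach_rejects n x hx

theorem Ffam_not_oneN : Ffam ∉ oneN := by
  rintro ⟨M, ⟨P, hP⟩, hsolve⟩
  obtain ⟨n, hn⟩ := NN_superpoly P
  have hsc : (M n).sc < NN n := lt_of_le_of_lt (hP n) hn
  set s := (M n).sc with hs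
  set x : List Unit := List.replicate (NN n) () with hxdef
  have hxlen : x.length = NN n := List.length_replicate ..
  have hxpos : x ∈ Fprob.pos n := hxlen
  obtain ⟨p, hpath, hacc⟩ := (hsolve n).1 x hxpos
  have pp : ∀ (v : ℕ) (h : v < x.length + 1) (w : ℕ) (hw : w < x.length + 1),
      v = w → p ⟨v, h⟩ = p ⟨w, hw⟩ := by
    intro v h w hw hvw
    subst hvw
    rfl
  have hstepN : ∀ (v : ℕ) (hv : v < x.length),
      p ⟨v + 1, Nat.succ_lt_succ hv⟩ ∈ (M n).next (p ⟨v, Nat.lt_succ_of_lt hv⟩) () := by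
    intro v hv
    exact hpath.2 ⟨v, hv⟩
  -- pigeonhole on the first s+1 states
  have hb : ∀ j : Fin (s + 1), (j : ℕ) < x.length + 1 := by
    intro j
    have := j.isLt
    omega
  have hcard : Fintype.card ((M n).Q) < Fintype.card (Fin (s + 1)) := by
    rw [Fintype.card_fin]
    exact Nat.lt_succ_of_le (le_of_eq rfl)
  obtain ⟨a, b, hab, hfeq⟩ :=
    Fintype.exists_ne_map_eq_of_card_lt (fun j : Fin (s + 1) => p ⟨(j : ℕ), hb j⟩) hcard
  have hpig : ∃ j1 j2 : ℕ, ∃ (h1 : j1 < x.length + 1) (h2 : j2 < x.length + 1),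
      j1 < j2 ∧ j2 ≤ s ∧ p ⟨j1, h1⟩ = p ⟨j2, h2⟩ := by
    rcases Nat.lt_or_ge (a : ℕ) (b : ℕ) with hlt | hge
    · exact ⟨a, b, hb a, hb b, hlt, by have := b.isLt; omega, hfeq⟩
    · have hne : (a : ℕ) ≠ (b : ℕ) := fun hc => hab (Fin.ext hc)
      exact ⟨b, a, hb b, hb a, by omega, by have := a.isLt; omega, hfeq.symm⟩
  obtain ⟨j1, j2, hj1, hj2, hlt12, hj2s, hpeq⟩ := hpig
  set t := j2 - j1 with ht
  set x' : List Unit := List.replicate (NN n - t) () with hx'def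
  have hx'len : x'.length = NN n - t := List.length_replicate ..
  have bnd : ∀ j : Fin (x'.length + 1),
      (if (j : ℕ) ≤ j1 then (j : ℕ) else (j : ℕ) + t) < x.length + 1 := by
    intro j
    have := j.isLt
    split <;> omega
  have haccepts : (M n).Accepts x' := by
    refine ⟨fun j => p ⟨if (j : ℕ) ≤ j1 then (j : ℕ) else (j : ℕ) + t, bnd j⟩, ⟨?_, ?_⟩, ?_⟩
    · show p ⟨if ((0 : Fin (x'.length + 1)) : ℕ) ≤ j1
          then ((0 : Fin (x'.length + 1)) : ℕ)
          else ((0 : Fin (x'.length + 1)) : ℕ) + t, bnd 0⟩ = (M n).start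
      rw [pp _ _ 0 (by omega) (by simp)]
      have h00 : (⟨0, by omega⟩ : Fin (x.length + 1)) = 0 := by apply Fin.ext; simp
      exact (congrArg p h00).trans hpath.1
    · intro j
      have hjm : (j : ℕ) < NN n - t := by
        have := j.isLt
        exact lt_of_lt_of_eq this hx'len
      show p ⟨if ((j : ℕ) + 1) ≤ j1 then ((j : ℕ) + 1) else ((j : ℕ) + 1) + t,
            bnd j.succ⟩ ∈
          (M n).next (p ⟨if (j : ℕ) ≤ j1 then (j : ℕ) else (j : ℕ) + t, bnd j.castSucc⟩) ()
      by_cases hc1 : (j : ℕ) + 1 ≤ j1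
      · have e1 := pp (if ((j : ℕ) + 1) ≤ j1 then ((j : ℕ) + 1) else ((j : ℕ) + 1) + t)
          (bnd j.succ) ((j : ℕ) + 1) (by omega) (by rw [if_pos hc1])
        have e2 := pp (if (j : ℕ) ≤ j1 then (j : ℕ) else (j : ℕ) + t)
          (bnd j.castSucc) (j : ℕ) (by omega) (by rw [if_pos (by omega)])
        rw [e1, e2]
        exact hstepN (j : ℕ) (by omega)
      · by_cases hc2 : (j : ℕ) ≤ j1
        · -- here (j : ℕ) = j1 : jump across the loop
          have e1 := pp (if ((j : ℕ) + 1) ≤ j1 then ((j : ℕ) + 1) else ((j : ℕ) + 1) + t)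
            (bnd j.succ) (j2 + 1) (by omega) (by rw [if_neg hc1]; omega)
          have e2 := (pp (if (j : ℕ) ≤ j1 then (j : ℕ) else (j : ℕ) + t)
            (bnd j.castSucc) j1 hj1 (by rw [if_pos hc2]; omega)).trans hpeq
          rw [e1, e2]
          exact hstepN j2 (by omega)
        · have e1 := pp (if ((j : ℕ) + 1) ≤ j1 then ((j : ℕ) + 1) else ((j : ℕ) + 1) + t)
            (bnd j.succ) (((j : ℕ) + t) + 1) (by omega) (by rw [if_neg hc1]; omega)
          have e2 := pp (if (j : ℕ) ≤ j1 then (j : ℕ) else (j : ℕ) + t)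
            (bnd j.castSucc) ((j : ℕ) + t) (by omega) (by rw [if_neg hc2])
          rw [e1, e2]
          exact hstepN ((j : ℕ) + t) (by omega)
    · show p ⟨if ((Fin.last x'.length : Fin (x'.length + 1)) : ℕ) ≤ j1
          then ((Fin.last x'.length : Fin (x'.length + 1)) : ℕ)
          else ((Fin.last x'.length : Fin (x'.length + 1)) : ℕ) + t,
          bnd (Fin.last x'.length)⟩ ∈ (M n).acc
      have hlv : ((Fin.last x'.length : Fin (x'.length + 1)) : ℕ) = x'.length := rfl
      have hj1lt : j1 < NN n - t := by omega
      rw [pp _ _ x.length (by omega) (by rw [hlv, hx'len, if_neg (by omega)]; omega)]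
      have hfl : (⟨x.length, by omega⟩ : Fin (x.length + 1)) = Fin.last x.length := rfl
      exact (congrArg (· ∈ (M n).acc) (congrArg p hfl)).mpr hacc
  have hx'neg : x' ∈ Fprob.neg n := by
    show 1 ≤ x'.length ∧ x'.length < NN n
    rw [hx'len]
    omega
  exact (hsolve n).2 x' hx'neg haccepts



/-- `co-1ReachU ⊄ 1N`: some family has complement in `1ReachU`
but itself lies outside `1N`. -/
theorem co_oneReachU_not_subset_oneN :
    ∃ F : Family, F.co ∈ oneReachU ∧ F ∉ oneN :=
  ⟨Ffam, FfamCo_mem, Ffam_not_oneN⟩
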